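/- arXiv:1205.3637 — 5 statements merged into one kernel-verified Lean document; each statement's English description precedes it below -/
import Mathlib

section
/- If a probability density p on ℝ has finite Fisher information I(p), then p is bounded pointwise by √(I(p)): for all x, p(x) ≤ √(I(p)). -/
open MeasureTheory

/-- A probability density `p` on `ℝ` with finite Fisher information
`I(p) = ∫_{p>0} p'(x)²/p(x) dx` is bounded pointwise by `√(I(p))`. -/
theorem density_le_sqrt_fisherInformation
    (p p' : ℝ → ℝ)
    (hnonneg : ∀ x, 0 ≤ p x)
    (hint : Integrable p)
    (hmass : ∫ x, p x = 1)
    (hderiv : ∀ x, HasDerivAt p (p' x) x)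
    (hp'int : Integrable p')
    (hfisher : IntegrableOn (fun x => (p' x) ^ 2 / p x) {x | 0 < p x}) :
    ∀ x, p x ≤ Real.sqrt (∫ x in {x | 0 < p x}, (p' x) ^ 2 / p x) := by
  set S : Set ℝ := {x | 0 < p x} with hSdef
  set I : ℝ := ∫ x in S, (p' x) ^ 2 / p x with hIdef
  have hc : Continuous p := continuous_iff_continuousAt.2 fun x => (hderiv x).continuousAt
  have hSopen : IsOpen S := isOpen_lt continuous_const hc
  have hSm : MeasurableSet S := hSopen.measurableSet
  have hp'zero : ∀ y, p y = 0 → p' y = 0 := by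
    intro y hy
    have hmin : IsLocalMin p y :=
      Filter.Eventually.of_forall fun z => by rw [hy]; exact hnonneg z
    exact hmin.hasDerivAt_eq_zero (hderiv y)
  have hI0 : 0 ≤ I :=
    setIntegral_nonneg hSm fun y hy => div_nonneg (sq_nonneg _) hy.le
  -- Cauchy–Schwarz: ∫_S |p'| ≤ √I
  have habs : ∫ y in S, |p' y| ≤ Real.sqrt I := by
    set f : ℝ → ℝ := fun y => Real.sqrt ((p' y) ^ 2 / p y) with hfdef
    set g : ℝ → ℝ := fun y => Real.sqrt (p y) with hgdef
    have hfmeas : AEStronglyMeasurable f (volume.restrict S) := by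
      exact (Real.continuous_sqrt.measurable.comp_aemeasurable
        (((hp'int.restrict (s := S)).aestronglyMeasurable.aemeasurable.pow_const 2).div
          hc.aemeasurable)).aestronglyMeasurable
    have hgmeas : AEStronglyMeasurable g (volume.restrict S) :=
      (Real.continuous_sqrt.measurable.comp_aemeasurable hc.aemeasurable).aestronglyMeasurable
    have hf2 : (fun y => f y ^ 2) =ᶠ[ae (volume.restrict S)] fun y => (p' y) ^ 2 / p y := by
      filter_upwards [ae_restrict_mem hSm] with y hy
      exact Real.sq_sqrt (div_nonneg (sq_nonneg _) hy.le)
    have hg2 : (fun y => g y ^ 2) =ᶠ[ae (volume.restrict S)] p := by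
      filter_upwards [ae_restrict_mem hSm] with y hy
      exact Real.sq_sqrt hy.le
    have hfL2 : MemLp f 2 (volume.restrict S) := by
      rw [memLp_two_iff_integrable_sq hfmeas]
      exact hfisher.congr hf2.symm
    have hgL2 : MemLp g 2 (volume.restrict S) := by
      rw [memLp_two_iff_integrable_sq hgmeas]
      exact (hint.restrict (s := S)).congr hg2.symm
    have hpq : (2 : ℝ).HolderConjugate 2 := Real.HolderConjugate.two_two
    have h2 : (ENNReal.ofReal (2 : ℝ)) = 2 := by
      simp [ENNReal.ofReal_ofNat]
    have hCS := integral_mul_le_Lp_mul_Lq_of_nonneg (μ := volume.restrict S) hpq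
      (Filter.Eventually.of_forall fun y => Real.sqrt_nonneg _)
      (Filter.Eventually.of_forall fun y => Real.sqrt_nonneg _)
      (h2 ▸ hfL2) (h2 ▸ hgL2)
    have heq : ∫ y in S, |p' y| = ∫ y in S, f y * g y := by
      refine setIntegral_congr_fun hSm fun y hy => ?_
      have hy' : 0 < p y := hy
      rw [hfdef, hgdef]
      simp only
      rw [← Real.sqrt_mul (div_nonneg (sq_nonneg _) hy'.le),
        div_mul_cancel₀ _ (ne_of_gt hy'), Real.sqrt_sq_eq_abs]
    have hfint : ∫ y in S, f y ^ (2:ℝ) ∂volume = I := by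
      rw [hIdef]
      refine integral_congr_ae ?_
      filter_upwards [hf2] with y hy
      rw [← hy]
      norm_num [Real.rpow_natCast]
    have hgint : ∫ y in S, g y ^ (2:ℝ) ∂volume ≤ 1 := by
      have : ∫ y in S, g y ^ (2:ℝ) ∂volume = ∫ y in S, p y := by
        refine integral_congr_ae ?_
        filter_upwards [hg2] with y hy
        rw [← hy]
        norm_num [Real.rpow_natCast]
      rw [this]
      calc ∫ y in S, p y ≤ ∫ y, p y :=
            setIntegral_le_integral hint (Filter.Eventually.of_forall hnonneg)
        _ = 1 := hmass
    rw [heq]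
    calc ∫ y in S, f y * g y
        ≤ (∫ y in S, f y ^ (2:ℝ)) ^ (1/(2:ℝ)) * (∫ y in S, g y ^ (2:ℝ)) ^ (1/(2:ℝ)) := hCS
      _ ≤ Real.sqrt I * 1 := by
          gcongr
          · rw [hfint, ← Real.sqrt_eq_rpow]
          · rw [← Real.sqrt_eq_rpow]
            exact Real.sqrt_le_one.mpr hgint
      _ = Real.sqrt I := mul_one _
  -- |p'| vanishes outside S
  have htotal : ∫ y, |p' y| ≤ Real.sqrt I := by
    rw [← setIntegral_eq_integral_of_forall_compl_eq_zero (s := S) (f := fun y => |p' y|)]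
    · exact habs
    · intro y hy
      have hy0 : p y = 0 := le_antisymm (not_lt.1 hy) (hnonneg y)
      rw [hp'zero y hy0, abs_zero]
  intro x
  refine le_of_forall_pos_le_add fun ε hε => ?_
  -- find y < x with p y < ε
  obtain ⟨y, hyx, hyε⟩ : ∃ y, y < x ∧ p y < ε := by
    by_contra h
    push_neg at h
    have hsub : Set.Iio x ⊆ {a : ℝ | ε ≤ p a} := fun a ha => (h a ha)
    have hfin := hint.measure_ge_lt_top hε
    have : (volume (Set.Iio x)) < ⊤ := lt_of_le_of_lt (measure_mono hsub) hfin
    simp at this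
  have hftc : ∫ t in y..x, p' t = p x - p y :=
    intervalIntegral.integral_eq_sub_of_hasDerivAt (fun t _ => hderiv t)
      hp'int.intervalIntegrable
  have hbound : ∫ t in y..x, p' t ≤ Real.sqrt I := by
    rw [intervalIntegral.integral_of_le hyx.le]
    calc ∫ t in Set.Ioc y x, p' t ≤ ∫ t in Set.Ioc y x, |p' t| := by
          refine integral_mono_ae ((hp'int.restrict).congr (by rfl)) (hp'int.abs.restrict)
            (Filter.Eventually.of_forall fun t => le_abs_self _)
      _ ≤ ∫ t, |p' t| :=
          setIntegral_le_integral hp'int.abs (Filter.Eventually.of_forall fun t => abs_nonneg _)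
      _ ≤ Real.sqrt I := htotal
  have : p x = p y + ∫ t in y..x, p' t := by rw [hftc]; ring
  rw [this]
  have := add_le_add hyε.le hbound
  linarith
end

section
/- If a random variable X has finite Fisher information I(X), then its characteristic function satisfies |f(t)| ≤ √(I(X))/|t| for all t ≠ 0. -/
open MeasureTheory Real FourierTransform Complex

-- Step A: L1 norm of p' bounded by sqrt of Fisher information
theorem abs_deriv_integral_le_sqrt_fisher
    (p p' : ℝ → ℝ)
    (hnonneg : ∀ x, 0 ≤ p x)
    (hint : Integrable p)
    (hmass : ∫ x, p x = 1)
    (hderiv : ∀ x, HasDerivAt p (p' x) x)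
    (hp'int : Integrable p')
    (hfisher : IntegrableOn (fun x => (p' x) ^ 2 / p x) {x | 0 < p x}) :
    ∫ x, |p' x| ≤ Real.sqrt (∫ x in {x | 0 < p x}, (p' x) ^ 2 / p x) := by
  set s : Set ℝ := {x | 0 < p x} with hs
  have hpc : Continuous p := by
    rw [continuous_iff_continuousAt]; exact fun x => (hderiv x).continuousAt
  have hso : IsOpen s := isOpen_lt continuous_const hpc
  have hsm : MeasurableSet s := hso.measurableSet
  -- p' vanishes off s
  have hzero : ∀ x ∉ s, p' x = 0 := by
    intro x hx
    have hx0 : p x = 0 := le_antisymm (not_lt.1 hx) (hnonneg x)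
    have : IsLocalMin p x := Filter.Eventually.of_forall (fun y => by
      rw [hx0]; exact hnonneg y)
    exact this.hasDerivAt_eq_zero (hderiv x)
  have hres : ∫ x, |p' x| = ∫ x in s, |p' x| := by
    refine (setIntegral_eq_integral_of_forall_compl_eq_zero (fun x hx => ?_)).symm
    rw [hzero x hx, abs_zero]
  rw [hres]
  set f : ℝ → ℝ := fun x => |p' x| / Real.sqrt (p x) with hf
  set g : ℝ → ℝ := fun x => Real.sqrt (p x) with hg
  have hfg : ∀ᵐ x ∂(volume.restrict s), |p' x| = f x * g x := by
    filter_upwards [ae_restrict_mem hsm] with x hx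
    have hpx : 0 < p x := hx
    rw [hf, hg]
    field_simp
  have hfmeas : AEStronglyMeasurable f (volume.restrict s) :=
    ((hp'int.1.norm.aemeasurable.div
      (Real.continuous_sqrt.comp hpc).aemeasurable).aestronglyMeasurable).restrict
  have hgmeas : AEStronglyMeasurable g (volume.restrict s) :=
    (Real.continuous_sqrt.comp hpc).aestronglyMeasurable.restrict
  have hf2 : ∀ᵐ x ∂(volume.restrict s), f x ^ 2 = (p' x) ^ 2 / p x := by
    filter_upwards [ae_restrict_mem hsm] with x hx
    have hpx : 0 < p x := hx
    rw [hf]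
    rw [div_pow, Real.sq_sqrt hpx.le, _root_.sq_abs]
  have hfint2 : Integrable (fun x => f x ^ 2) (volume.restrict s) :=
    hfisher.congr (Filter.EventuallyEq.symm hf2)
  have hgint2 : Integrable (fun x => g x ^ 2) (volume.restrict s) := by
    refine (hint.restrict (s := s)).congr (Filter.Eventually.of_forall fun x => ?_)
    show p x = g x ^ 2
    rw [hg]; rw [Real.sq_sqrt (hnonneg x)]
  have hfmem : MemLp f 2 (volume.restrict s) :=
    (memLp_two_iff_integrable_sq hfmeas).2 hfint2
  have hgmem : MemLp g 2 (volume.restrict s) :=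
    (memLp_two_iff_integrable_sq hgmeas).2 hgint2
  have hconj : Real.HolderConjugate 2 2 := Real.HolderConjugate.two_two
  have hfnn : 0 ≤ᵐ[volume.restrict s] f :=
    Filter.Eventually.of_forall fun x => div_nonneg (abs_nonneg _) (Real.sqrt_nonneg _)
  have hgnn : 0 ≤ᵐ[volume.restrict s] g :=
    Filter.Eventually.of_forall fun x => Real.sqrt_nonneg _
  have h2 : ENNReal.ofReal (2:ℝ) = 2 := by norm_num
  have key := integral_mul_le_Lp_mul_Lq_of_nonneg hconj hfnn hgnn
      (h2 ▸ hfmem) (h2 ▸ hgmem)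
  calc ∫ x in s, |p' x| = ∫ x in s, f x * g x := integral_congr_ae hfg
    _ ≤ (∫ x in s, f x ^ (2:ℝ)) ^ ((1:ℝ)/2) * (∫ x in s, g x ^ (2:ℝ)) ^ ((1:ℝ)/2) := key
    _ = (∫ x in s, (p' x)^2 / p x) ^ ((1:ℝ)/2) * (∫ x in s, p x) ^ ((1:ℝ)/2) := by
        congr 1
        · congr 1
          refine integral_congr_ae ?_
          filter_upwards [hf2] with x hx
          show f x ^ (2:ℝ) = p' x ^ 2 / p x
          rw [show (2:ℝ) = ((2:ℕ):ℝ) by norm_num, Real.rpow_natCast, hx]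
        · congr 1
          refine integral_congr_ae (Filter.Eventually.of_forall fun x => ?_)
          show g x ^ (2:ℝ) = p x
          rw [show (2:ℝ) = ((2:ℕ):ℝ) by norm_num, Real.rpow_natCast, hg,
            Real.sq_sqrt (hnonneg x)]
    _ ≤ (∫ x in s, (p' x)^2 / p x) ^ ((1:ℝ)/2) * (1:ℝ) ^ ((1:ℝ)/2) := by
        apply mul_le_mul_of_nonneg_left
        · apply Real.rpow_le_rpow (setIntegral_nonneg hsm fun x hx => hnonneg x)
          · rw [← hmass]
            exact setIntegral_le_integral hint
              (Filter.Eventually.of_forall fun x => hnonneg x)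
          · norm_num
        · apply Real.rpow_nonneg
          exact setIntegral_nonneg hsm fun x _ => div_nonneg (sq_nonneg _) (hnonneg x)
    _ = Real.sqrt (∫ x in s, (p' x)^2 / p x) := by
        rw [Real.one_rpow, mul_one, Real.sqrt_eq_rpow]

open MeasureTheory

/-- If a random variable `X` has an absolutely continuous density
with finite Fisher information `I(X)`, then its characteristic function
`f(t) = E e^{itX}` satisfies `|f(t)| ≤ √(I(X)) / |t|` for every `t ≠ 0`. -/
theorem charFun_le_sqrt_fisherInformation_div
    (p p' : ℝ → ℝ)
    (hnonneg : ∀ x, 0 ≤ p x)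
    (hint : Integrable p)
    (hmass : ∫ x, p x = 1)
    (hderiv : ∀ x, HasDerivAt p (p' x) x)
    (hp'int : Integrable p')
    (hfisher : IntegrableOn (fun x => (p' x) ^ 2 / p x) {x | 0 < p x}) :
    ∀ t : ℝ, t ≠ 0 →
      ‖∫ x : ℝ, Complex.exp (Complex.I * (t * x)) * (p x : ℂ)‖ ≤
        Real.sqrt (∫ x in {x | 0 < p x}, (p' x) ^ 2 / p x) / |t| := by
  intro t ht
  have hL1 : ∫ x, |p' x| ≤ Real.sqrt (∫ x in {x | 0 < p x}, (p' x) ^ 2 / p x) :=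
    abs_deriv_integral_le_sqrt_fisher p p' hnonneg hint hmass hderiv hp'int hfisher
  set q : ℝ → ℂ := fun x => (p x : ℂ) with hq
  have hq_int : Integrable q := hint.ofReal
  have hqd : ∀ x, HasDerivAt q ((p' x : ℂ)) x := fun x => (hderiv x).ofReal_comp
  have hq_diff : Differentiable ℝ q := fun x => (hqd x).differentiableAt
  have hderivq : deriv q = fun x => (p' x : ℂ) := funext fun x => (hqd x).deriv
  have hq'_int : Integrable (deriv q) := by rw [hderivq]; exact hp'int.ofReal
  set w : ℝ := -t / (2 * π) with hw
  have hπ : (π : ℝ) ≠ 0 := Real.pi_ne_zero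
  have hfour : (∫ x : ℝ, Complex.exp (Complex.I * (t * x)) * q x) = 𝓕 q w := by
    rw [Real.fourier_real_eq_integral_exp_smul]
    refine integral_congr_ae (Filter.Eventually.of_forall fun v => ?_)
    show Complex.exp (Complex.I * (t * v)) * q v = Complex.exp (↑(-2 * π * v * w) * Complex.I) • q v
    rw [smul_eq_mul]
    congr 2
    have hvw : -2 * π * v * w = t * v := by rw [hw]; field_simp
    rw [hvw]
    push_cast
    ring
  have hkey := congrFun (Real.fourier_deriv hq_int hq_diff hq'_int) w
  have hnorm1 : ‖𝓕 (deriv q) w‖ ≤ ∫ x, |p' x| := by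
    refine le_trans
      (VectorFourier.norm_fourierIntegral_le_integral_norm 𝐞 volume (innerₗ ℝ) (deriv q) w) ?_
    rw [hderivq]
    refine le_of_eq (integral_congr_ae (Filter.Eventually.of_forall fun x => ?_))
    simp [Complex.norm_real, Real.norm_eq_abs]
  have habs : ‖(((2 * π * Complex.I * (w:ℂ))) : ℂ)‖ = |t| := by
    rw [hw]
    simp only [norm_mul, Complex.norm_I, Complex.norm_real, Complex.norm_ofNat,
      Real.norm_eq_abs, mul_one]

    rw [abs_div, abs_neg, abs_mul]
    rw [abs_of_pos Real.pi_pos, abs_of_pos (by norm_num : (0:ℝ) < 2)]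
    field_simp
  have hmul : |t| * ‖𝓕 q w‖ ≤ Real.sqrt (∫ x in {x | 0 < p x}, (p' x) ^ 2 / p x) := by
    calc |t| * ‖𝓕 q w‖ = ‖(2 * π * Complex.I * (w:ℂ)) • 𝓕 q w‖ := by
          rw [norm_smul, habs]
      _ = ‖𝓕 (deriv q) w‖ := by rw [hkey]
      _ ≤ ∫ x, |p' x| := hnorm1
      _ ≤ _ := hL1
  rw [hfour, le_div_iff₀ (abs_pos.2 ht), mul_comm]
  exact hmul
end

section
/- Fisher information is monotone under convolution: for any two probability densities p and q on ℝ, I(p * q) ≤ min(I(p), I(q)); equivalently, for independent random variables X and Y, I(X+Y) ≤ min(I(X), I(Y)). -/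
open MeasureTheory Real Set Filter Metric
open scoped ENNReal Topology

lemma deriv_zero_of_nonneg_of_zero {f f' : ℝ → ℝ} (hf : ∀ x, 0 ≤ f x)
    {x : ℝ} (h : HasDerivAt f (f' x) x) (hx : f x = 0) : f' x = 0 := by
  have hmin : IsLocalMin f x := Filter.Eventually.of_forall (fun y => by rw [hx]; exact hf y)
  exact hmin.hasDerivAt_eq_zero h

lemma key_conv_le
    (p p' q c c' : ℝ → ℝ)
    (hpnonneg : ∀ x, 0 ≤ p x)
    (hp0 : ∀ x, p x = 0 → p' x = 0)
    (hpm : Measurable p) (hp'm : Measurable p')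
    (hqnonneg : ∀ x, 0 ≤ q x) (hqm : Measurable q)
    (hqint : Integrable q) (hqmass : ∫ x, q x = 1)
    (hcm : Measurable c)
    (hc : ∀ x, c x = ∫ y, p (x - y) * q y)
    (hc' : ∀ᵐ x, c' x = ∫ y, p' (x - y) * q y) :
    (∫⁻ x in {x | 0 < c x}, ENNReal.ofReal ((c' x) ^ 2 / c x))
      ≤ ∫⁻ x in {x | 0 < p x}, ENNReal.ofReal ((p' x) ^ 2 / p x) := by
  classical
  set g : ℝ → ℝ := fun t => if 0 < p t then p' t ^ 2 / p t else 0 with hg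
  have hgnonneg : ∀ t, 0 ≤ g t := by
    intro t; by_cases h : 0 < p t
    · simp only [hg, if_pos h]; positivity
    · simp [hg, if_neg h]
  have hgm : Measurable g := by
    apply Measurable.ite (measurableSet_lt measurable_const hpm)
    · exact (hp'm.pow_const 2).div hpm
    · exact measurable_const
  have pointwise : ∀ x, 0 < c x → c' x = (∫ y, p' (x - y) * q y) →
      ENNReal.ofReal ((c' x) ^ 2 / c x)
        ≤ ∫⁻ y, ENNReal.ofReal (g (x - y)) * ENNReal.ofReal (q y) := by
    intro x hcx hc'x
    have hint : Integrable (fun y => p (x - y) * q y) := by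
      by_contra hni
      rw [hc x, integral_undef hni] at hcx
      exact lt_irrefl 0 hcx
    set A : ℝ → ℝ≥0∞ := fun y => ENNReal.ofReal (g (x - y)) * ENNReal.ofReal (q y) with hA
    set B : ℝ → ℝ≥0∞ := fun y => ENNReal.ofReal (p (x - y) * q y) with hB
    have hAm : Measurable A :=
      ((hgm.comp (measurable_const.sub measurable_id)).ennreal_ofReal).mul
        hqm.ennreal_ofReal
    have hBm : Measurable B :=
      ((hpm.comp (measurable_const.sub measurable_id)).mul hqm).ennreal_ofReal
    have hprod : ∀ y, ENNReal.ofReal ‖p' (x - y) * q y‖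
        = (A y) ^ (1/2 : ℝ) * (B y) ^ (1/2 : ℝ) := by
      intro y
      rcases eq_or_lt_of_le (hpnonneg (x - y)) with hp0' | hppos
      · have hpz : p (x - y) = 0 := hp0'.symm
        have hp'z : p' (x - y) = 0 := hp0 _ hpz
        simp [hA, hB, hg, hpz, hp'z, ENNReal.zero_rpow_of_pos (by norm_num : (0:ℝ) < 1/2)]
      · have hgpos : g (x - y) = p' (x - y) ^ 2 / p (x - y) := by simp only [hg, if_pos hppos]
        have hAB : A y * B y = ENNReal.ofReal (g (x - y) * q y * (p (x - y) * q y)) := by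
          simp only [hA, hB]
          rw [ENNReal.ofReal_mul (mul_nonneg (hgnonneg _) (hqnonneg y)),
            ENNReal.ofReal_mul (hgnonneg _)]
        rw [← ENNReal.mul_rpow_of_nonneg _ _ (by norm_num : (0:ℝ) ≤ 1/2), hAB,
          ENNReal.ofReal_rpow_of_nonneg
            (mul_nonneg (mul_nonneg (hgnonneg _) (hqnonneg y))
              (mul_nonneg (hpnonneg _) (hqnonneg y))) (by norm_num : (0:ℝ) ≤ 1/2)]
        congr 1
        rw [hgpos, show p' (x - y) ^ 2 / p (x - y) * q y * (p (x - y) * q y)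
            = (p' (x - y) * q y) ^ 2 * (p (x - y) / p (x - y)) by ring,
          div_self hppos.ne', mul_one, ← Real.sqrt_eq_rpow, Real.sqrt_sq_eq_abs,
          norm_mul, Real.norm_eq_abs, Real.norm_eq_abs, abs_mul]
    have holder := ENNReal.lintegral_mul_le_Lp_mul_Lq volume
      (Real.holderConjugate_iff.mpr ⟨one_lt_two, by norm_num⟩ : Real.HolderConjugate 2 2) (hAm.pow_const (1/2:ℝ)).aemeasurable
      (hBm.pow_const (1/2:ℝ)).aemeasurable
    have hBint : ∫⁻ y, B y = ENNReal.ofReal (c x) := by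
      rw [hc x, ← ofReal_integral_eq_lintegral_ofReal hint
        (Filter.Eventually.of_forall (fun y => mul_nonneg (hpnonneg _) (hqnonneg y)))]
    have hnorm : (ENNReal.ofReal ‖c' x‖) ≤ ∫⁻ y, (A y) ^ (1/2:ℝ) * (B y) ^ (1/2:ℝ) := by
      rw [hc'x]
      calc ENNReal.ofReal ‖∫ y, p' (x - y) * q y‖
          = ‖∫ y, p' (x - y) * q y‖₊ := ofReal_norm _
        _ ≤ ∫⁻ y, ‖p' (x - y) * q y‖₊ := enorm_integral_le_lintegral_enorm _
        _ = ∫⁻ y, (A y) ^ (1/2:ℝ) * (B y) ^ (1/2:ℝ) := by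
            congr 1; funext y; rw [← enorm_eq_nnnorm, ← ofReal_norm, hprod y]
    have hAsimp : ∀ y, ((A y) ^ (1/2:ℝ)) ^ (2:ℝ) = A y := by
      intro y; rw [← ENNReal.rpow_mul]; norm_num
    have hBsimp : ∀ y, ((B y) ^ (1/2:ℝ)) ^ (2:ℝ) = B y := by
      intro y; rw [← ENNReal.rpow_mul]; norm_num
    have key1 : ENNReal.ofReal (c' x ^ 2) ≤ (∫⁻ y, A y) * ENNReal.ofReal (c x) := by
      have h1 : ENNReal.ofReal (c' x ^ 2) = (ENNReal.ofReal ‖c' x‖) ^ 2 := by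
        rw [← ENNReal.ofReal_pow (norm_nonneg _), Real.norm_eq_abs, sq_abs]
      rw [h1, ← hBint]
      calc (ENNReal.ofReal ‖c' x‖) ^ 2
          ≤ ((∫⁻ y, ((A y) ^ (1/2:ℝ)) ^ (2:ℝ)) ^ (1/(2:ℝ))
            * (∫⁻ y, ((B y) ^ (1/2:ℝ)) ^ (2:ℝ)) ^ (1/(2:ℝ))) ^ 2 := by
            apply pow_le_pow_left' (le_trans hnorm _)
            exact le_trans (holder) (le_refl _)
        _ = (∫⁻ y, A y) * ∫⁻ y, B y := by
            simp_rw [hAsimp, hBsimp]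
            rw [mul_pow, ← ENNReal.rpow_natCast ((∫⁻ y, A y) ^ (1/(2:ℝ))) 2,
              ← ENNReal.rpow_natCast ((∫⁻ y, B y) ^ (1/(2:ℝ))) 2,
              ← ENNReal.rpow_mul, ← ENNReal.rpow_mul]
            norm_num
    rw [ENNReal.ofReal_div_of_pos hcx]
    exact ENNReal.div_le_of_le_mul key1
  -- now integrate
  have hsmeas : MeasurableSet {x : ℝ | 0 < c x} := measurableSet_lt measurable_const hcm
  calc ∫⁻ x in {x | 0 < c x}, ENNReal.ofReal ((c' x) ^ 2 / c x)
      ≤ ∫⁻ x in {x | 0 < c x}, ∫⁻ y, ENNReal.ofReal (g (x - y)) * ENNReal.ofReal (q y) := by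
        apply lintegral_mono_ae
        filter_upwards [ae_restrict_of_ae hc', ae_restrict_mem hsmeas] with x h1 h2
        exact pointwise x h2 h1
    _ ≤ ∫⁻ x, ∫⁻ y, ENNReal.ofReal (g (x - y)) * ENNReal.ofReal (q y) :=
        setLIntegral_le_lintegral _ _
    _ = ∫⁻ y, ∫⁻ x, ENNReal.ofReal (g (x - y)) * ENNReal.ofReal (q y) ∂volume ∂volume := by
        apply lintegral_lintegral_swap
        exact (((hgm.comp (measurable_fst.sub measurable_snd)).ennreal_ofReal).mul
          ((hqm.comp measurable_snd).ennreal_ofReal)).aemeasurable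
    _ = ∫⁻ y, (∫⁻ x, ENNReal.ofReal (g (x - y))) * ENNReal.ofReal (q y) := by
        congr 1; funext y
        exact lintegral_mul_const _ ((hgm.comp (measurable_id.sub measurable_const)).ennreal_ofReal)
    _ = ∫⁻ y, (∫⁻ t, ENNReal.ofReal (g t)) * ENNReal.ofReal (q y) := by
        congr 1; funext y; congr 1
        exact lintegral_sub_right_eq_self (fun t => ENNReal.ofReal (g t)) y
    _ = (∫⁻ t, ENNReal.ofReal (g t)) * ∫⁻ y, ENNReal.ofReal (q y) :=
        lintegral_const_mul _ hqm.ennreal_ofReal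
    _ = (∫⁻ t, ENNReal.ofReal (g t)) * 1 := by
        rw [← ofReal_integral_eq_lintegral_ofReal hqint
          (Filter.Eventually.of_forall hqnonneg), hqmass, ENNReal.ofReal_one]
    _ = ∫⁻ x in {x | 0 < p x}, ENNReal.ofReal ((p' x) ^ 2 / p x) := by
        rw [mul_one, ← lintegral_indicator (measurableSet_lt measurable_const hpm)]
        congr 1; funext t
        by_cases h : 0 < p t
        · simp [hg, Set.indicator_of_mem, h, Set.mem_setOf_eq]
        · simp [hg, h, Set.indicator_of_notMem, Set.mem_setOf_eq]


lemma integrable_deriv_of_fisher_ne_top (q q' : ℝ → ℝ)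
    (hqnonneg : ∀ x, 0 ≤ q x) (hqint : Integrable q)
    (hqm : Measurable q) (hq'm : Measurable q')
    (hq0 : ∀ x, q x = 0 → q' x = 0)
    (hIq : (∫⁻ x in {x | 0 < q x}, ENNReal.ofReal ((q' x) ^ 2 / q x)) ≠ ⊤) :
    Integrable q' := by
  classical
  set g : ℝ → ℝ := fun t => if 0 < q t then q' t ^ 2 / q t else 0 with hg
  have hgnonneg : ∀ t, 0 ≤ g t := by
    intro t; by_cases h : 0 < q t
    · simp only [hg, if_pos h]; positivity
    · simp [hg, if_neg h]
  have hgm : Measurable g :=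
    Measurable.ite (measurableSet_lt measurable_const hqm)
      ((hq'm.pow_const 2).div hqm) measurable_const
  have hIg : ∫⁻ t, ENNReal.ofReal (g t) = ∫⁻ x in {x | 0 < q x}, ENNReal.ofReal ((q' x) ^ 2 / q x) := by
    rw [← lintegral_indicator (measurableSet_lt measurable_const hqm)]
    congr 1; funext t
    by_cases h : 0 < q t
    · simp [hg, Set.indicator_of_mem, h, Set.mem_setOf_eq]
    · simp [hg, h, Set.indicator_of_notMem, Set.mem_setOf_eq]
  have hprod : ∀ t, (‖q' t‖₊ : ℝ≥0∞)
      = (ENNReal.ofReal (g t)) ^ (1/2 : ℝ) * (ENNReal.ofReal (q t)) ^ (1/2 : ℝ) := by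
    intro t
    rcases eq_or_lt_of_le (hqnonneg t) with hqz | hqpos
    · have h1 : q t = 0 := hqz.symm
      have h2 : q' t = 0 := hq0 t h1
      simp [hg, h1, h2, ENNReal.zero_rpow_of_pos (by norm_num : (0:ℝ) < 1/2)]
    · have hgpos : g t = q' t ^ 2 / q t := by simp only [hg, if_pos hqpos]
      rw [← ENNReal.mul_rpow_of_nonneg _ _ (by norm_num : (0:ℝ) ≤ 1/2),
        ← ENNReal.ofReal_mul (hgnonneg t),
        ENNReal.ofReal_rpow_of_nonneg (mul_nonneg (hgnonneg t) (hqnonneg t))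
          (by norm_num : (0:ℝ) ≤ 1/2)]
      rw [← enorm_eq_nnnorm, ← ofReal_norm]
      congr 1
      rw [hgpos, div_mul_cancel₀ _ hqpos.ne', ← Real.sqrt_eq_rpow, Real.sqrt_sq_eq_abs,
        Real.norm_eq_abs]
  refine ⟨hq'm.aestronglyMeasurable, ?_⟩
  rw [hasFiniteIntegral_def]
  calc ∫⁻ t, (‖q' t‖₊ : ℝ≥0∞)
      = ∫⁻ t, (ENNReal.ofReal (g t)) ^ (1/2:ℝ) * (ENNReal.ofReal (q t)) ^ (1/2:ℝ) := by
        simp_rw [hprod]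
    _ ≤ (∫⁻ t, ((ENNReal.ofReal (g t)) ^ (1/2:ℝ)) ^ (2:ℝ)) ^ (1/(2:ℝ))
        * (∫⁻ t, ((ENNReal.ofReal (q t)) ^ (1/2:ℝ)) ^ (2:ℝ)) ^ (1/(2:ℝ)) :=
        ENNReal.lintegral_mul_le_Lp_mul_Lq volume
          (Real.holderConjugate_iff.mpr ⟨one_lt_two, by norm_num⟩ : Real.HolderConjugate 2 2)
          ((hgm.ennreal_ofReal.pow_const _).aemeasurable)
          ((hqm.ennreal_ofReal.pow_const _).aemeasurable)
    _ < ⊤ := by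
        have e1 : ∀ t:ℝ, ((ENNReal.ofReal (g t)) ^ (1/2:ℝ)) ^ (2:ℝ) = ENNReal.ofReal (g t) := by
          intro t; rw [← ENNReal.rpow_mul]; norm_num
        have e2 : ∀ t:ℝ, ((ENNReal.ofReal (q t)) ^ (1/2:ℝ)) ^ (2:ℝ) = ENNReal.ofReal (q t) := by
          intro t; rw [← ENNReal.rpow_mul]; norm_num
        simp_rw [e1, e2]
        apply ENNReal.mul_lt_top
        · apply ENNReal.rpow_lt_top_of_nonneg (by norm_num)
          rw [hIg]; exact hIq
        · apply ENNReal.rpow_lt_top_of_nonneg (by norm_num)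
          have : ∫⁻ t, ENNReal.ofReal (q t) = ∫⁻ t, (‖q t‖₊ : ℝ≥0∞) := by
            congr 1; funext t; rw [← Real.enorm_eq_ofReal (hqnonneg t)]; rfl
          rw [this]
          exact ((hasFiniteIntegral_def q volume).mp hqint.2).ne

lemma bounded_of_integrable_deriv (q q' : ℝ → ℝ)
    (hqnonneg : ∀ x, 0 ≤ q x) (hqint : Integrable q)
    (hqderiv : ∀ x, HasDerivAt q (q' x) x) (hq'int : Integrable q') :
    ∀ x, q x ≤ ∫ t, |q' t| := by
  intro x
  set M := ∫ t, |q' t| with hM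
  refine le_of_forall_pos_le_add ?_
  intro ε hε
  have hex : ∃ a, a ≤ x ∧ q a < ε := by
    by_contra h
    push_neg at h
    have h1 : ENNReal.ofReal ε * volume (Iic x) ≤ ∫⁻ t in Iic x, (‖q t‖₊ : ℝ≥0∞) := by
      rw [← setLIntegral_const (Iic x) (ENNReal.ofReal ε)]
      apply setLIntegral_mono' measurableSet_Iic
      intro t ht
      calc ENNReal.ofReal ε ≤ ENNReal.ofReal (q t) := ENNReal.ofReal_le_ofReal (h t ht)
        _ = (‖q t‖₊ : ℝ≥0∞) := (Real.enorm_eq_ofReal (hqnonneg t)).symm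
    have h2 : ENNReal.ofReal ε * volume (Iic x) = ⊤ := by
      rw [Real.volume_Iic, ENNReal.mul_top (by simpa [ENNReal.ofReal_eq_zero, not_le] using hε)]
    have hbig : (⊤ : ℝ≥0∞) ≤ ∫⁻ t, (‖q t‖₊ : ℝ≥0∞) :=
      h2 ▸ h1.trans (setLIntegral_le_lintegral _ _)
    have hfin := (hasFiniteIntegral_def q volume).mp hqint.2
    change ∫⁻ t, (‖q t‖₊ : ℝ≥0∞) < ⊤ at hfin
    simp [top_le_iff.mp hbig] at hfin
  obtain ⟨a, hax, haε⟩ := hex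
  have hftc : ∫ t in a..x, q' t = q x - q a :=
    intervalIntegral.integral_eq_sub_of_hasDerivAt (fun t _ => hqderiv t)
      hq'int.intervalIntegrable
  have h2 : ∫ t in a..x, q' t ≤ M := by
    calc ∫ t in a..x, q' t ≤ ∫ t in a..x, |q' t| := by
          apply intervalIntegral.integral_mono_on hax hq'int.intervalIntegrable
            hq'int.abs.intervalIntegrable
          intro t _; exact le_abs_self _
      _ = ∫ t in Ioc a x, |q' t| := intervalIntegral.integral_of_le hax
      _ ≤ M := setIntegral_le_integral hq'int.abs
            (Filter.Eventually.of_forall (fun t => abs_nonneg _))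
  linarith [haε.le, hftc]


lemma conv_deriv_ae (p q q' c c' : ℝ → ℝ)
    (hpnonneg : ∀ x, 0 ≤ p x) (hpint : Integrable p) (hpm : Measurable p)
    (hqnonneg : ∀ x, 0 ≤ q x) (hqm : Measurable q)
    (hqderiv : ∀ x, HasDerivAt q (q' x) x)
    (hq'int : Integrable q') (hq'm : Measurable q')
    (hqbd : ∀ x, q x ≤ ∫ t, |q' t|)
    (hcsymm : ∀ x, c x = ∫ y, q (x - y) * p y)
    (hcderiv : ∀ x, HasDerivAt c (c' x) x) :
    ∀ᵐ x, c' x = ∫ y, q' (x - y) * p y := by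
  classical
  set M : ℝ := ∫ t, |q' t| with hM
  set g : ℝ → ℝ := fun t => ∫ y, q' (t - y) * p y with hgdef
  -- measurability of the convolution integrand
  have hmeas2 : Measurable (fun z : ℝ × ℝ => q' (z.1 - z.2) * p z.2) :=
    (hq'm.comp (measurable_fst.sub measurable_snd)).mul (hpm.comp measurable_snd)
  have hgsm : StronglyMeasurable g := by
    rw [hgdef]
    exact hmeas2.stronglyMeasurable.integral_prod_right'
  -- finiteness of the iterated lintegral of norms
  have hKq : ∫⁻ t, (‖q' t‖₊ : ℝ≥0∞) < ⊤ := (hasFiniteIntegral_def q' volume).mp hq'int.2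
  have hKp : ∫⁻ y, (‖p y‖₊ : ℝ≥0∞) < ⊤ := (hasFiniteIntegral_def p volume).mp hpint.2
  have hiter : ∫⁻ t, ∫⁻ y, ((‖q' (t - y)‖₊ * ‖p y‖₊ : ℝ≥0∞)) ∂volume ∂volume
      = (∫⁻ t, (‖q' t‖₊ : ℝ≥0∞)) * ∫⁻ y, (‖p y‖₊ : ℝ≥0∞) := by
    rw [lintegral_lintegral_swap
      (((hq'm.comp (measurable_fst.sub measurable_snd)).nnnorm.coe_nnreal_ennreal).mul
        ((hpm.comp measurable_snd).nnnorm.coe_nnreal_ennreal)).aemeasurable]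
    calc ∫⁻ y, ∫⁻ t, ((‖q' (t - y)‖₊ * ‖p y‖₊ : ℝ≥0∞)) ∂volume ∂volume
        = ∫⁻ y, (∫⁻ t, (‖q' (t - y)‖₊ : ℝ≥0∞)) * (‖p y‖₊ : ℝ≥0∞) ∂volume := by
          congr 1; funext y
          exact lintegral_mul_const _
            ((hq'm.comp (measurable_id.sub measurable_const)).nnnorm.coe_nnreal_ennreal)
      _ = ∫⁻ y, (∫⁻ t, (‖q' t‖₊ : ℝ≥0∞)) * (‖p y‖₊ : ℝ≥0∞) ∂volume := by
          congr 1; funext y; congr 1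
          exact lintegral_sub_right_eq_self (fun t => (‖q' t‖₊ : ℝ≥0∞)) y
      _ = (∫⁻ t, (‖q' t‖₊ : ℝ≥0∞)) * ∫⁻ y, (‖p y‖₊ : ℝ≥0∞) :=
          lintegral_const_mul _ (hpm.nnnorm.coe_nnreal_ennreal)
  -- g is integrable
  have hgint : Integrable g := by
    refine ⟨hgsm.aestronglyMeasurable, ?_⟩
    rw [hasFiniteIntegral_def]
    calc ∫⁻ t, (‖g t‖₊ : ℝ≥0∞)
        ≤ ∫⁻ t, ∫⁻ y, ((‖q' (t - y)‖₊ * ‖p y‖₊ : ℝ≥0∞)) ∂volume ∂volume := by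
          apply lintegral_mono
          intro t
          calc (‖g t‖₊ : ℝ≥0∞) ≤ ∫⁻ y, (‖q' (t - y) * p y‖₊ : ℝ≥0∞) :=
              enorm_integral_le_lintegral_enorm _
            _ = ∫⁻ y, ((‖q' (t - y)‖₊ * ‖p y‖₊ : ℝ≥0∞)) := by
              congr 1; funext y; rw [nnnorm_mul]; norm_cast
      _ < ⊤ := by rw [hiter]; exact ENNReal.mul_lt_top hKq hKp
  -- each translate integrand is integrable
  have hq_int_y : ∀ z : ℝ, Integrable (fun y => q (z - y) * p y) := by
    intro z
    have hb : ∀ y, ‖q (z - y) * p y‖ ≤ M * p y := fun y => by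
      rw [norm_mul, Real.norm_eq_abs, Real.norm_eq_abs, abs_of_nonneg (hqnonneg _),
        abs_of_nonneg (hpnonneg _)]
      exact mul_le_mul_of_nonneg_right (hqbd _) (hpnonneg y)
    exact Integrable.mono' (hpint.const_mul M)
      (((hqm.comp (measurable_const.sub measurable_id)).mul hpm).aestronglyMeasurable)
      (ae_of_all _ hb)
  -- Fubini on finite slabs
  have fub : ∀ a b : ℝ, (∫ y, (∫ t in Ioc a b, q' (t - y)) * p y)
      = ∫ t in Ioc a b, g t := by
    intro a b
    have hprodint : Integrable (fun z : ℝ × ℝ => q' (z.1 - z.2) * p z.2)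
        ((volume.restrict (Ioc a b)).prod volume) := by
      refine ⟨(hmeas2.aestronglyMeasurable), ?_⟩
      rw [hasFiniteIntegral_def]; simp only [enorm_eq_nnnorm]
      rw [lintegral_prod _ (hmeas2.nnnorm.coe_nnreal_ennreal.aemeasurable)]
      calc ∫⁻ t in Ioc a b, ∫⁻ y, (‖q' (t - y) * p y‖₊ : ℝ≥0∞) ∂volume ∂volume
          ≤ ∫⁻ t, ∫⁻ y, (‖q' (t - y) * p y‖₊ : ℝ≥0∞) ∂volume ∂volume :=
            setLIntegral_le_lintegral _ _
        _ = ∫⁻ t, ∫⁻ y, ((‖q' (t - y)‖₊ * ‖p y‖₊ : ℝ≥0∞)) ∂volume ∂volume := by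
            congr 1; funext t; congr 1; funext y; rw [nnnorm_mul]; norm_cast
        _ < ⊤ := by rw [hiter]; exact ENNReal.mul_lt_top hKq hKp
    have swap := integral_integral_swap (f := fun t y => q' (t - y) * p y) (by exact hprodint)
    calc ∫ y, (∫ t in Ioc a b, q' (t - y)) * p y
        = ∫ y, ∫ t in Ioc a b, q' (t - y) * p y := by
          congr 1; funext y
          exact (integral_mul_const (p y) (fun t => q' (t - y))).symm
      _ = ∫ t in Ioc a b, ∫ y, q' (t - y) * p y := swap.symm
      _ = ∫ t in Ioc a b, g t := rfl
  -- FTC for the translates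
  have hftc : ∀ x y : ℝ, q (x - y) - q (0 - y) = ∫ t in (0:ℝ)..x, q' (t - y) := by
    intro x y
    rw [intervalIntegral.integral_eq_sub_of_hasDerivAt
      (f := fun t => q (t - y)) (f' := fun t => q' (t - y))
      (fun t _ => by simpa [Function.comp_def] using (hqderiv (t - y)).comp t ((hasDerivAt_id t).sub_const y))
      ((hq'int.comp_sub_right y).intervalIntegrable)]
  -- the integral representation of c
  have hrep : ∀ x : ℝ, c x - c 0 = ∫ t in (0:ℝ)..x, g t := by
    intro x
    have hsub : c x - c 0 = ∫ y, (q (x - y) - q (0 - y)) * p y := by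
      rw [hcsymm x, hcsymm 0, ← integral_sub (hq_int_y x) (hq_int_y 0)]
      congr 1; funext y; ring
    rw [hsub]
    have : ∀ y : ℝ, (q (x - y) - q (0 - y)) * p y = (∫ t in (0:ℝ)..x, q' (t - y)) * p y := by
      intro y; rw [hftc x y]
    simp_rw [this]
    rcases le_total 0 x with h0x | hx0
    · have e1 : ∀ y : ℝ, (∫ t in (0:ℝ)..x, q' (t - y)) = ∫ t in Ioc (0:ℝ) x, q' (t - y) := by
        intro y; exact intervalIntegral.integral_of_le h0x
      simp_rw [e1]
      rw [fub 0 x, intervalIntegral.integral_of_le h0x]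
    · have e1 : ∀ y : ℝ, (∫ t in (0:ℝ)..x, q' (t - y)) = -∫ t in Ioc x (0:ℝ), q' (t - y) := by
        intro y; exact intervalIntegral.integral_of_ge hx0
      simp_rw [e1, neg_mul]
      rw [integral_neg, fub x 0, intervalIntegral.integral_of_ge hx0]
  -- Lebesgue differentiation
  filter_upwards [IsUnifLocDoublingMeasure.ae_tendsto_average_norm_sub
    (volume : Measure ℝ) (hgint.locallyIntegrable) 1] with x hx
  have havg : Tendsto (fun h : ℝ => ⨍ t in closedBall (x + h/2) (h/2), ‖g t - g x‖)
      (𝓝[>] 0) (𝓝 0) := by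
    apply hx (fun h => x + h/2) (fun h => h/2)
    · apply tendsto_nhdsWithin_of_tendsto_nhds_of_eventually_within
      · have : Tendsto (fun h : ℝ => h/2) (𝓝 0) (𝓝 0) := by
          simpa using (tendsto_id (α := ℝ) (x := 𝓝 0)).div_const 2
        exact this.mono_left nhdsWithin_le_nhds
      · filter_upwards [self_mem_nhdsWithin] with h (hh : 0 < h)
        exact mem_Ioi.mpr (by linarith)
    · filter_upwards [self_mem_nhdsWithin] with h (hh : 0 < h)
      rw [mem_closedBall, one_mul, Real.dist_eq]
      rw [show x - (x + h/2) = -(h/2) by ring, abs_neg, abs_of_nonneg (by linarith)]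
  have hball : ∀ h : ℝ, 0 < h → closedBall (x + h/2) (h/2) = Icc x (x + h) := by
    intro h hh
    rw [Real.closedBall_eq_Icc]
    congr 1 <;> ring
  -- the slope bound
  have hbound : ∀ h : ℝ, 0 < h →
      ‖(c (x + h) - c x)/h - g x‖ ≤ ⨍ t in closedBall (x + h/2) (h/2), ‖g t - g x‖ := by
    intro h hh
    have hc1 : c (x + h) - c x = ∫ t in Ioc x (x + h), g t := by
      have e := intervalIntegral.integral_interval_sub_left
        (hgint.intervalIntegrable (a := 0) (b := x + h)) (hgint.intervalIntegrable (a := 0) (b := x))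
      have : c (x + h) - c x = (c (x + h) - c 0) - (c x - c 0) := by ring
      rw [this, hrep (x + h), hrep x, e, intervalIntegral.integral_of_le (by linarith)]
    have hvol : (volume (Icc x (x + h))).toReal = h := by
      rw [Real.volume_Icc]; rw [ENNReal.toReal_ofReal (by linarith)]; ring_nf
    have hconst : ∫ t in Ioc x (x + h), g x = h * g x := by
      rw [setIntegral_const, measureReal_def, Real.volume_Ioc, smul_eq_mul,
        ENNReal.toReal_ofReal (by linarith)]; ring_nf
    have hIcc : ∫ t in Ioc x (x + h), (g t - g x) = ∫ t in Icc x (x + h), (g t - g x) :=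
      (integral_Icc_eq_integral_Ioc).symm
    have e2 : (c (x + h) - c x)/h - g x = (∫ t in Icc x (x + h), (g t - g x)) / h := by
      rw [← hIcc, integral_sub (hgint.integrableOn) ((integrableOn_const_iff).mpr (Or.inr (by
        rw [Real.volume_Ioc]; exact ENNReal.ofReal_lt_top))), hconst, hc1]
      field_simp
    rw [e2, hball h hh, setAverage_eq, measureReal_def, hvol]
    rw [div_eq_inv_mul, Real.norm_eq_abs, abs_mul, abs_inv, abs_of_nonneg hh.le, smul_eq_mul]
    refine mul_le_mul_of_nonneg_left ?_ (inv_nonneg.mpr hh.le)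
    rw [← Real.norm_eq_abs]
    exact norm_integral_le_integral_norm _
  -- slope tends to g x
  have hslope_g : Tendsto (fun h : ℝ => (c (x + h) - c x)/h) (𝓝[>] 0) (𝓝 (g x)) := by
    have h0 : Tendsto (fun h : ℝ => (c (x + h) - c x)/h - g x) (𝓝[>] 0) (𝓝 0) := by
      apply squeeze_zero_norm' _ havg
      filter_upwards [self_mem_nhdsWithin] with h (hh : 0 < h)
      exact hbound h hh
    have := h0.add (tendsto_const_nhds (x := g x))
    simpa using this
  -- slope tends to c' x
  have hslope_c : Tendsto (fun h : ℝ => (c (x + h) - c x)/h) (𝓝[>] 0) (𝓝 (c' x)) := by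
    have h1 := (hasDerivAt_iff_tendsto_slope).mp (hcderiv x)
    have h2 : Tendsto (fun h : ℝ => x + h) (𝓝[>] 0) (𝓝[≠] x) := by
      apply tendsto_nhdsWithin_of_tendsto_nhds_of_eventually_within
      · have : Tendsto (fun h : ℝ => x + h) (𝓝 0) (𝓝 x) := by
          simpa using (tendsto_const_nhds (x := x)).add (tendsto_id (α := ℝ) (x := 𝓝 0))
        exact this.mono_left nhdsWithin_le_nhds
      · filter_upwards [self_mem_nhdsWithin] with h (hh : 0 < h)
        simp only [mem_compl_iff, mem_singleton_iff]
        exact fun habs => hh.ne' (by linarith)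
    have h3 := h1.comp h2
    have heq : (slope c x ∘ fun h : ℝ => x + h) = fun h : ℝ => (c (x + h) - c x)/h := by
      funext h
      simp only [Function.comp_apply, slope_def_field, add_sub_cancel_left]
    rw [heq] at h3
    exact h3
  exact tendsto_nhds_unique hslope_c hslope_g


/-- Monotonicity of Fisher information under convolution: if `p` and
`q` are absolutely continuous probability densities and `c = p * q` is their
convolution (with derivative `c' = p' * q = p * q'`), then
`I(p * q) ≤ min (I(p), I(q))`. -/
theorem fisherInformation_conv_le_min
    (p p' q q' c c' : ℝ → ℝ)
    (hpnonneg : ∀ x, 0 ≤ p x) (hpint : Integrable p) (hpmass : ∫ x, p x = 1)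
    (hqnonneg : ∀ x, 0 ≤ q x) (hqint : Integrable q) (hqmass : ∫ x, q x = 1)
    (hpderiv : ∀ x, HasDerivAt p (p' x) x)
    (hqderiv : ∀ x, HasDerivAt q (q' x) x)
    (hc : ∀ x, c x = ∫ y, p (x - y) * q y)
    (hcderiv : ∀ x, HasDerivAt c (c' x) x)
    (hc' : ∀ x, c' x = ∫ y, p' (x - y) * q y) :
    (∫⁻ x in {x | 0 < c x}, ENNReal.ofReal ((c' x) ^ 2 / c x))
      ≤ min (∫⁻ x in {x | 0 < p x}, ENNReal.ofReal ((p' x) ^ 2 / p x))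
          (∫⁻ x in {x | 0 < q x}, ENNReal.ofReal ((q' x) ^ 2 / q x)) := by
  have hpm : Measurable p :=
    (continuous_iff_continuousAt.mpr fun x => (hpderiv x).continuousAt).measurable
  have hqm : Measurable q :=
    (continuous_iff_continuousAt.mpr fun x => (hqderiv x).continuousAt).measurable
  have hcm : Measurable c :=
    (continuous_iff_continuousAt.mpr fun x => (hcderiv x).continuousAt).measurable
  have hp'm : Measurable p' := by
    have : p' = deriv p := funext fun x => ((hpderiv x).deriv).symm
    rw [this]; exact measurable_deriv p
  have hq'm : Measurable q' := by
    have : q' = deriv q := funext fun x => ((hqderiv x).deriv).symm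
    rw [this]; exact measurable_deriv q
  have hp0 : ∀ x, p x = 0 → p' x = 0 := fun x hx =>
    deriv_zero_of_nonneg_of_zero hpnonneg (hpderiv x) hx
  have hq0 : ∀ x, q x = 0 → q' x = 0 := fun x hx =>
    deriv_zero_of_nonneg_of_zero hqnonneg (hqderiv x) hx
  have csymm : ∀ x, c x = ∫ y, q (x - y) * p y := by
    intro x
    have h := integral_sub_left_eq_self (fun y => q (x - y) * p y) volume x
    simp only [sub_sub_cancel] at h
    rw [hc x, ← h]
    congr 1; funext y; ring
  refine le_min ?_ ?_
  · exact key_conv_le p p' q c c' hpnonneg hp0 hpm hp'm hqnonneg hqm hqint hqmass hcm hc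
      (Filter.Eventually.of_forall hc')
  · by_cases hIq : (∫⁻ x in {x | 0 < q x}, ENNReal.ofReal ((q' x) ^ 2 / q x)) = ⊤
    · rw [hIq]; exact le_top
    · have hq'int : Integrable q' :=
        integrable_deriv_of_fisher_ne_top q q' hqnonneg hqint hqm hq'm hq0 hIq
      have hqbd : ∀ x, q x ≤ ∫ t, |q' t| :=
        bounded_of_integrable_deriv q q' hqnonneg hqint hqderiv hq'int
      have hae : ∀ᵐ x, c' x = ∫ y, q' (x - y) * p y :=
        conv_deriv_ae p q q' c c' hpnonneg hpint hpm hqnonneg hqm hqderiv hq'int hq'm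
          hqbd csymm hcderiv
      exact key_conv_le q q' p c c' hqnonneg hq0 hqm hq'm hpnonneg hpm hpint hpmass hcm
        csymm hae
end

section
/- Let p = p₁ * p₂ be a convolution of two absolutely continuous probability densities each with Fisher information at most I. Then for all x ∈ ℝ, |p'(x)| ≤ I^{3/4} √(p(x)) ≤ I. -/
open MeasureTheory

private lemma aux_deriv_zero {f : ℝ → ℝ} {d x : ℝ} (h0 : ∀ y, 0 ≤ f y) (hx : f x = 0)
    (hd : HasDerivAt f d x) : d = 0 := by
  have hmin : IsLocalMin f x := Filter.Eventually.of_forall fun y => by rw [hx]; exact h0 y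
  exact hmin.hasDerivAt_eq_zero hd

private lemma aux_cauchy_schwarz {f g : ℝ → ℝ}
    (hf : AEStronglyMeasurable f volume) (hg : AEStronglyMeasurable g volume)
    (hf2 : Integrable (fun x => f x ^ 2)) (hg2 : Integrable (fun x => g x ^ 2)) :
    |∫ x, f x * g x| ≤ Real.sqrt (∫ x, f x ^ 2) * Real.sqrt (∫ x, g x ^ 2) := by
  have hpq : (2 : ℝ).HolderConjugate 2 := (Real.holderConjugate_iff_eq_conjExponent one_lt_two).2 (by norm_num)
  have hmf : MemLp f (ENNReal.ofReal 2) volume := by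
    rw [show ENNReal.ofReal 2 = 2 by norm_num]
    exact (memLp_two_iff_integrable_sq hf).2 hf2
  have hmg : MemLp g (ENNReal.ofReal 2) volume := by
    rw [show ENNReal.ofReal 2 = 2 by norm_num]
    exact (memLp_two_iff_integrable_sq hg).2 hg2
  have H := integral_mul_norm_le_Lp_mul_Lq hpq hmf hmg
  have hnorm : ∀ t : ℝ, ‖t‖ ^ (2 : ℝ) = t ^ 2 := fun t => by
    rw [show (2 : ℝ) = ((2 : ℕ) : ℝ) by norm_num, Real.rpow_natCast]
    simp [sq_abs]
  calc |∫ x, f x * g x| = ‖∫ x, f x * g x‖ := (Real.norm_eq_abs _).symm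
    _ ≤ ∫ x, ‖f x * g x‖ := norm_integral_le_integral_norm _
    _ = ∫ x, ‖f x‖ * ‖g x‖ := by simp [norm_mul]
    _ ≤ (∫ x, ‖f x‖ ^ (2:ℝ)) ^ ((1:ℝ)/2) * (∫ x, ‖g x‖ ^ (2:ℝ)) ^ ((1:ℝ)/2) := H
    _ = Real.sqrt (∫ x, f x ^ 2) * Real.sqrt (∫ x, g x ^ 2) := by
        simp_rw [hnorm, Real.sqrt_eq_rpow]

private lemma aux_exists_score (q q' : ℝ → ℝ) {I : ℝ}
    (hnn : ∀ x, 0 ≤ q x) (hd : ∀ x, HasDerivAt q (q' x) x)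
    (hfish : IntegrableOn (fun x => (q' x) ^ 2 / q x) {x | 0 < q x})
    (hI : ∫ x in {x | 0 < q x}, (q' x) ^ 2 / q x ≤ I) :
    ∃ u : ℝ → ℝ, Measurable u ∧ (∀ x, q' x = u x * Real.sqrt (q x)) ∧
      Integrable (fun x => u x ^ 2) ∧ (∫ x, u x ^ 2) ≤ I := by
  have hqc : Continuous q := continuous_iff_continuousAt.2 fun x => (hd x).continuousAt
  have hq'm : Measurable q' := by
    have : q' = deriv q := funext fun x => ((hd x).deriv).symm
    rw [this]; exact measurable_deriv q
  have hS : MeasurableSet {x : ℝ | 0 < q x} := (isOpen_lt continuous_const hqc).measurableSet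
  refine ⟨fun x => if 0 < q x then q' x / Real.sqrt (q x) else 0, ?_, ?_, ?_, ?_⟩
  · exact Measurable.ite hS (hq'm.div (Real.continuous_sqrt.comp hqc).measurable)
      measurable_const
  · intro x
    by_cases hx : 0 < q x
    · simp only [hx, if_pos]
      rw [div_mul_cancel₀]
      exact Real.sqrt_ne_zero'.2 hx
    · have h0 : q x = 0 := le_antisymm (not_lt.1 hx) (hnn x)
      have : q' x = 0 := aux_deriv_zero hnn h0 (hd x)
      simp [hx, this]
  all_goals {
    have hsq : (fun x => (if 0 < q x then q' x / Real.sqrt (q x) else 0) ^ 2)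
        = Set.indicator {x | 0 < q x} (fun x => (q' x) ^ 2 / q x) := by
      funext x
      by_cases hx : 0 < q x
      · simp [Set.indicator_apply, Set.mem_setOf_eq, hx, div_pow, Real.sq_sqrt hx.le]
      · simp [Set.indicator_apply, Set.mem_setOf_eq, hx]
    first
    | (rw [hsq]; exact (integrable_indicator_iff hS).2 hfish)
    | (rw [hsq, integral_indicator hS]; exact hI) }

private lemma aux_density_le_sqrt (q q' : ℝ → ℝ) {I : ℝ}
    (hnn : ∀ x, 0 ≤ q x) (hint : Integrable q) (hmass : ∫ x, q x = 1)
    (hd : ∀ x, HasDerivAt q (q' x) x)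
    (hfish : IntegrableOn (fun x => (q' x) ^ 2 / q x) {x | 0 < q x})
    (hI : ∫ x in {x | 0 < q x}, (q' x) ^ 2 / q x ≤ I) :
    ∀ x, q x ≤ Real.sqrt I := by
  obtain ⟨u, hum, hueq, hu2, hu2I⟩ := aux_exists_score q q' hnn hd hfish hI
  have hqc : Continuous q := continuous_iff_continuousAt.2 fun x => (hd x).continuousAt
  have hq'm : Measurable q' := by
    have : q' = deriv q := funext fun x => ((hd x).deriv).symm
    rw [this]; exact measurable_deriv q
  -- q' is integrable
  have habs : Integrable q' := by
    refine Integrable.mono' ((hu2.add hint).div_const 2) hq'm.aestronglyMeasurable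
      (Filter.Eventually.of_forall fun x => ?_)
    rw [hueq x, Real.norm_eq_abs, abs_mul, abs_of_nonneg (Real.sqrt_nonneg _)]
    have h2 := two_mul_le_add_sq |u x| (Real.sqrt (q x))
    rw [sq_abs, Real.sq_sqrt (hnn x)] at h2
    simp only [Pi.add_apply, Pi.div_apply]
    linarith
  -- ∫ |q'| ≤ √I
  have hq'bound : ∫ x, |q' x| ≤ Real.sqrt I := by
    have heq : (fun x => |q' x|) = fun x => |u x| * Real.sqrt (q x) := by
      funext x
      rw [hueq x, abs_mul, abs_of_nonneg (Real.sqrt_nonneg _)]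
    have hcs := aux_cauchy_schwarz (f := fun x => |u x|) (g := fun x => Real.sqrt (q x))
      hum.abs.aestronglyMeasurable
      (Real.continuous_sqrt.comp hqc).aestronglyMeasurable
      (by simpa [sq_abs] using hu2)
      (by simpa [Real.sq_sqrt (hnn _)] using hint)
    rw [heq]
    have hnonneg : 0 ≤ ∫ x, |u x| * Real.sqrt (q x) :=
      integral_nonneg fun x => mul_nonneg (abs_nonneg _) (Real.sqrt_nonneg _)
    rw [← abs_of_nonneg hnonneg]
    calc |∫ x, |u x| * Real.sqrt (q x)|
        ≤ Real.sqrt (∫ x, |u x| ^ 2) * Real.sqrt (∫ x, Real.sqrt (q x) ^ 2) := hcs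
      _ = Real.sqrt (∫ x, u x ^ 2) * Real.sqrt (∫ x, q x) := by
          simp_rw [sq_abs, Real.sq_sqrt (hnn _)]
      _ ≤ Real.sqrt I * 1 := by
          rw [hmass, Real.sqrt_one]
          exact mul_le_mul_of_nonneg_right (Real.sqrt_le_sqrt hu2I) zero_le_one
      _ = Real.sqrt I := mul_one _
  -- FTC bound
  have key : ∀ a x : ℝ, a ≤ x → q x ≤ q a + Real.sqrt I := by
    intro a x hax
    have hftc : ∫ y in a..x, q' y = q x - q a :=
      intervalIntegral.integral_eq_sub_of_hasDerivAt (fun t _ => hd t)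
        habs.intervalIntegrable
    have h1 : q x - q a ≤ Real.sqrt I := by
      rw [← hftc]
      calc ∫ y in a..x, q' y ≤ |∫ y in a..x, q' y| := le_abs_self _
        _ ≤ ∫ y in a..x, |q' y| := intervalIntegral.abs_integral_le_integral_abs hax
        _ = ∫ y in Set.Ioc a x, |q' y| := intervalIntegral.integral_of_le hax
        _ ≤ ∫ y, |q' y| := setIntegral_le_integral habs.abs
            (Filter.Eventually.of_forall fun y => abs_nonneg _)
        _ ≤ Real.sqrt I := hq'bound
    linarith
  intro x
  refine le_of_forall_pos_le_add fun ε hε => ?_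
  obtain ⟨a, hax, ha⟩ : ∃ a, a ≤ x ∧ q a ≤ ε := by
    by_contra hc
    push_neg at hc
    have hs : MeasurableSet (Set.Ioc (x - 2/ε) x) := measurableSet_Ioc
    have hμ : volume (Set.Ioc (x - 2/ε) x) ≠ ⊤ := by
      rw [Real.volume_Ioc]; exact ENNReal.ofReal_ne_top
    have hge := setIntegral_ge_of_const_le (c := ε) hs hμ
      (fun y hy => (hc y hy.2).le) hint.integrableOn
    have hvol : volume.real (Set.Ioc (x - 2/ε) x) = 2/ε := by
      rw [measureReal_def, Real.volume_Ioc, ENNReal.toReal_ofReal (by have := div_pos (show (0:ℝ) < 2 by norm_num) hε; linarith : (0:ℝ) ≤ x - (x - 2/ε))]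
      ring
    rw [hvol, smul_eq_mul, mul_comm] at hge
    have h2 : ε * (2/ε) = 2 := by field_simp
    rw [h2] at hge
    have hle : ∫ y in Set.Ioc (x - 2/ε) x, q y ≤ 1 := by
      rw [← hmass]
      exact setIntegral_le_integral hint (Filter.Eventually.of_forall hnn)
    linarith
  calc q x ≤ q a + Real.sqrt I := key a x hax
    _ ≤ Real.sqrt I + ε := by linarith

/-- Let `p = p₁ * p₂` be the convolution of two absolutely
continuous probability densities, each with Fisher information at most `I`.
Then for all `x`, `|p'(x)| ≤ I^{3/4} √(p(x)) ≤ I`. -/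
theorem deriv_bound_conv_two_densities
    (p₁ p₁' p₂ p₂' p p' : ℝ → ℝ) (I : ℝ)
    (h₁nonneg : ∀ x, 0 ≤ p₁ x) (h₁int : Integrable p₁) (h₁mass : ∫ x, p₁ x = 1)
    (h₂nonneg : ∀ x, 0 ≤ p₂ x) (h₂int : Integrable p₂) (h₂mass : ∫ x, p₂ x = 1)
    (h₁deriv : ∀ x, HasDerivAt p₁ (p₁' x) x)
    (h₂deriv : ∀ x, HasDerivAt p₂ (p₂' x) x)
    (h₁fisher : IntegrableOn (fun x => (p₁' x) ^ 2 / p₁ x) {x | 0 < p₁ x})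
    (h₂fisher : IntegrableOn (fun x => (p₂' x) ^ 2 / p₂ x) {x | 0 < p₂ x})
    (h₁I : ∫ x in {x | 0 < p₁ x}, (p₁' x) ^ 2 / p₁ x ≤ I)
    (h₂I : ∫ x in {x | 0 < p₂ x}, (p₂' x) ^ 2 / p₂ x ≤ I)
    (hp : ∀ x, p x = ∫ y, p₁ (x - y) * p₂ y)
    (hp' : ∀ x, p' x = ∫ y, p₁' (x - y) * p₂ y) :
    ∀ x, |p' x| ≤ I ^ ((3 : ℝ) / 4) * Real.sqrt (p x) ∧
      I ^ ((3 : ℝ) / 4) * Real.sqrt (p x) ≤ I := by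
  obtain ⟨u₁, hu₁m, hu₁eq, hu₁2, hu₁I⟩ := aux_exists_score p₁ p₁' h₁nonneg h₁deriv h₁fisher h₁I
  have hI0 : 0 ≤ I := le_trans (integral_nonneg fun x => sq_nonneg _) hu₁I
  have hp₁sup : ∀ y, p₁ y ≤ Real.sqrt I :=
    aux_density_le_sqrt p₁ p₁' h₁nonneg h₁int h₁mass h₁deriv h₁fisher h₁I
  have hp₂sup : ∀ y, p₂ y ≤ Real.sqrt I :=
    aux_density_le_sqrt p₂ p₂' h₂nonneg h₂int h₂mass h₂deriv h₂fisher h₂I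
  have hIpos : 0 < I := by
    rcases hI0.lt_or_eq with h | h
    · exact h
    · exfalso
      have hz : ∀ y, p₂ y = 0 := fun y =>
        le_antisymm (by simpa [← h, Real.sqrt_zero] using hp₂sup y) (h₂nonneg y)
      have : (∫ x, p₂ x) = 0 := by simp [hz]
      rw [h₂mass] at this; norm_num at this
  have hp₁c : Continuous p₁ := continuous_iff_continuousAt.2 fun x => (h₁deriv x).continuousAt
  have hp₂c : Continuous p₂ := continuous_iff_continuousAt.2 fun x => (h₂deriv x).continuousAt
  intro x
  have hpx0 : 0 ≤ p x := by
    rw [hp x]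
    exact integral_nonneg fun y => mul_nonneg (h₁nonneg _) (h₂nonneg _)
  have hpxle : p x ≤ Real.sqrt I := by
    rw [hp x]
    calc ∫ y, p₁ (x - y) * p₂ y ≤ ∫ y, Real.sqrt I * p₂ y := by
          refine integral_mono_of_nonneg
            (Filter.Eventually.of_forall fun y => mul_nonneg (h₁nonneg _) (h₂nonneg _))
            (h₂int.const_mul _)
            (Filter.Eventually.of_forall fun y =>
              mul_le_mul_of_nonneg_right (hp₁sup _) (h₂nonneg y))
      _ = Real.sqrt I := by rw [integral_const_mul, h₂mass, mul_one]
  constructor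
  · -- main bound
    by_cases hF : Integrable (fun y => p₁' (x - y) * p₂ y)
    · rw [hp' x]
      set f : ℝ → ℝ := fun y => u₁ (x - y) * Real.sqrt (p₂ y) with hf_def
      set g : ℝ → ℝ := fun y => Real.sqrt (p₁ (x - y)) * Real.sqrt (p₂ y) with hg_def
      have hFeq : (fun y => p₁' (x - y) * p₂ y) = fun y => f y * g y := by
        funext y
        simp only [hf_def, hg_def]
        rw [hu₁eq (x - y)]
        conv_lhs => rw [← Real.mul_self_sqrt (h₂nonneg y)]
        ring
      have hfm : AEStronglyMeasurable f volume :=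
        ((hu₁m.comp (measurable_const.sub measurable_id)).mul
          (Real.continuous_sqrt.comp hp₂c).measurable).aestronglyMeasurable
      have hgm : AEStronglyMeasurable g volume :=
        ((Real.continuous_sqrt.comp (hp₁c.comp (continuous_const.sub continuous_id))).mul
          (Real.continuous_sqrt.comp hp₂c)).aestronglyMeasurable
      have hf2eq : ∀ y, f y ^ 2 = u₁ (x - y) ^ 2 * p₂ y := fun y => by
        rw [hf_def]; simp only [mul_pow, Real.sq_sqrt (h₂nonneg y)]
      have hg2eq : ∀ y, g y ^ 2 = p₁ (x - y) * p₂ y := fun y => by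
        rw [hg_def]
        simp only [mul_pow, Real.sq_sqrt (h₂nonneg y), Real.sq_sqrt (h₁nonneg (x - y))]
      have hu₁comp : Integrable (fun y => u₁ (x - y) ^ 2) :=
        (hu₁2 : Integrable (fun z => u₁ z ^ 2)).comp_sub_left x
      have hf2 : Integrable (fun y => f y ^ 2) := by
        refine Integrable.mono' (hu₁comp.mul_const (Real.sqrt I))
          ((hfm.mul hfm).congr (Filter.Eventually.of_forall fun y => (pow_two (f y)).symm))
          (Filter.Eventually.of_forall fun y => ?_)
        rw [Real.norm_eq_abs, abs_of_nonneg (sq_nonneg _), hf2eq y]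
        exact mul_le_mul_of_nonneg_left (hp₂sup y) (sq_nonneg _)
      have hg2 : Integrable (fun y => g y ^ 2) := by
        refine Integrable.mono' (h₂int.const_mul (Real.sqrt I))
          ((hgm.mul hgm).congr (Filter.Eventually.of_forall fun y => (pow_two (g y)).symm))
          (Filter.Eventually.of_forall fun y => ?_)
        rw [Real.norm_eq_abs, abs_of_nonneg (sq_nonneg _), hg2eq y]
        exact mul_le_mul_of_nonneg_right (hp₁sup _) (h₂nonneg y)
      have hint_f2 : (∫ y, f y ^ 2) ≤ I * Real.sqrt I := by
        calc (∫ y, f y ^ 2) ≤ ∫ y, u₁ (x - y) ^ 2 * Real.sqrt I := by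
              refine integral_mono_of_nonneg (Filter.Eventually.of_forall fun y => sq_nonneg _)
                (hu₁comp.mul_const _) (Filter.Eventually.of_forall fun y => ?_)
              show f y ^ 2 ≤ u₁ (x - y) ^ 2 * Real.sqrt I
              rw [hf2eq y]
              exact mul_le_mul_of_nonneg_left (hp₂sup y) (sq_nonneg _)
          _ = (∫ y, u₁ (x - y) ^ 2) * Real.sqrt I := integral_mul_const _ _
          _ = (∫ z, u₁ z ^ 2) * Real.sqrt I := by
              rw [integral_sub_left_eq_self (fun z => u₁ z ^ 2) volume x]
          _ ≤ I * Real.sqrt I := mul_le_mul_of_nonneg_right hu₁I (Real.sqrt_nonneg _)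
      have hint_g2 : (∫ y, g y ^ 2) = p x := by
        rw [hp x]; simp_rw [hg2eq]
      have hsf : Real.sqrt (∫ y, f y ^ 2) ≤ I ^ ((3:ℝ)/4) := by
        have h1 : Real.sqrt (∫ y, f y ^ 2) ≤ Real.sqrt (I * Real.sqrt I) :=
          Real.sqrt_le_sqrt hint_f2
        refine h1.trans_eq ?_
        rw [Real.sqrt_mul hI0, Real.sqrt_eq_rpow I, Real.sqrt_eq_rpow (I ^ ((1:ℝ)/2)),
          ← Real.rpow_mul hI0, ← Real.rpow_add hIpos]
        norm_num
      have hcs := aux_cauchy_schwarz hfm hgm hf2 hg2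
      rw [hFeq]
      calc |∫ y, f y * g y|
          ≤ Real.sqrt (∫ y, f y ^ 2) * Real.sqrt (∫ y, g y ^ 2) := hcs
        _ ≤ I ^ ((3:ℝ)/4) * Real.sqrt (p x) := by
            rw [hint_g2]
            exact mul_le_mul_of_nonneg_right hsf (Real.sqrt_nonneg _)
    · rw [hp' x, integral_undef hF]
      simpa using mul_nonneg (Real.rpow_nonneg hI0 _) (Real.sqrt_nonneg _)
  · -- second bound
    have h1 : Real.sqrt (p x) ≤ I ^ ((1:ℝ)/4) := by
      calc Real.sqrt (p x) ≤ Real.sqrt (Real.sqrt I) := Real.sqrt_le_sqrt hpxle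
        _ = I ^ ((1:ℝ)/4) := by
            rw [Real.sqrt_eq_rpow, Real.sqrt_eq_rpow, ← Real.rpow_mul hI0]
            norm_num
    calc I ^ ((3:ℝ)/4) * Real.sqrt (p x) ≤ I ^ ((3:ℝ)/4) * I ^ ((1:ℝ)/4) :=
          mul_le_mul_of_nonneg_left h1 (Real.rpow_nonneg hI0 _)
      _ = I := by rw [← Real.rpow_add hIpos]; norm_num
end

section
/- Let p = p₁ * p₂ be a convolution of two absolutely continuous probability densities each with Fisher information at most I. Then its second derivative p''(x) = ∫ p₁'(y) p₂'(x−y) dy satisfies ∫_{p>0} p''(x)²/p(x) dx ≤ I². -/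
open MeasureTheory
open scoped ENNReal

/-- Let `p = p₁ * p₂` be the convolution of two absolutely
continuous probability densities, each with Fisher information at most `I`, with
integrable derivatives.  Then the second derivative `p'' = p₁' * p₂'` satisfies
`∫_{p>0} p''(x)²/p(x) dx ≤ I²`. -/
theorem second_deriv_bound_conv_two_densities
    (p₁ p₁' p₂ p₂' p p'' : ℝ → ℝ) (I : ℝ)
    (h₁nonneg : ∀ x, 0 ≤ p₁ x) (h₁int : Integrable p₁) (h₁mass : ∫ x, p₁ x = 1)
    (h₂nonneg : ∀ x, 0 ≤ p₂ x) (h₂int : Integrable p₂) (h₂mass : ∫ x, p₂ x = 1)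
    (h₁deriv : ∀ x, HasDerivAt p₁ (p₁' x) x)
    (h₂deriv : ∀ x, HasDerivAt p₂ (p₂' x) x)
    (h₁'int : Integrable p₁') (h₂'int : Integrable p₂')
    (h₁fisher : IntegrableOn (fun x => (p₁' x) ^ 2 / p₁ x) {x | 0 < p₁ x})
    (h₂fisher : IntegrableOn (fun x => (p₂' x) ^ 2 / p₂ x) {x | 0 < p₂ x})
    (h₁I : ∫ x in {x | 0 < p₁ x}, (p₁' x) ^ 2 / p₁ x ≤ I)
    (h₂I : ∫ x in {x | 0 < p₂ x}, (p₂' x) ^ 2 / p₂ x ≤ I)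
    (hp : ∀ x, p x = ∫ y, p₁ (x - y) * p₂ y)
    (hp'' : ∀ x, p'' x = ∫ y, p₁' y * p₂' (x - y)) :
    (∫⁻ x in {x | 0 < p x}, ENNReal.ofReal ((p'' x) ^ 2 / p x))
      ≤ ENNReal.ofReal (I ^ 2) := by
  have hI0 : 0 ≤ I :=
    le_trans (integral_nonneg fun x => div_nonneg (sq_nonneg _) (h₁nonneg x)) h₁I
  have h₁cont : Continuous p₁ :=
    continuous_iff_continuousAt.2 fun x => (h₁deriv x).continuousAt
  have h₂cont : Continuous p₂ :=
    continuous_iff_continuousAt.2 fun x => (h₂deriv x).continuousAt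
  have m₁' : Measurable p₁' := by
    have h : p₁' = deriv p₁ := funext fun x => ((h₁deriv x).deriv).symm
    rw [h]; exact measurable_deriv p₁
  have m₂' : Measurable p₂' := by
    have h : p₂' = deriv p₂ := funext fun x => ((h₂deriv x).deriv).symm
    rw [h]; exact measurable_deriv p₂
  have h₁zero : ∀ y, p₁ y = 0 → p₁' y = 0 := fun y hy =>
    IsLocalMin.hasDerivAt_eq_zero
      (Filter.Eventually.of_forall fun z => by rw [hy]; exact h₁nonneg z) (h₁deriv y)
  have h₂zero : ∀ y, p₂ y = 0 → p₂' y = 0 := fun y hy =>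
    IsLocalMin.hasDerivAt_eq_zero
      (Filter.Eventually.of_forall fun z => by rw [hy]; exact h₂nonneg z) (h₂deriv y)
  set f₁ : ℝ → ℝ≥0∞ := fun y => ENNReal.ofReal ((p₁' y) ^ 2 / p₁ y) with hf₁def
  set f₂ : ℝ → ℝ≥0∞ := fun y => ENNReal.ofReal ((p₂' y) ^ 2 / p₂ y) with hf₂def
  set q₁ : ℝ → ℝ≥0∞ := fun y => ENNReal.ofReal (p₁ y) with hq₁def
  set q₂ : ℝ → ℝ≥0∞ := fun y => ENNReal.ofReal (p₂ y) with hq₂def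
  have mf₁ : Measurable f₁ :=
    ENNReal.measurable_ofReal.comp ((m₁'.pow_const 2).div h₁cont.measurable)
  have mf₂ : Measurable f₂ :=
    ENNReal.measurable_ofReal.comp ((m₂'.pow_const 2).div h₂cont.measurable)
  have mq₁ : Measurable q₁ := ENNReal.measurable_ofReal.comp h₁cont.measurable
  have mq₂ : Measurable q₂ := ENNReal.measurable_ofReal.comp h₂cont.measurable
  have key₁ : ∀ y, f₁ y * q₁ y = ENNReal.ofReal ((p₁' y) ^ 2) := by
    intro y
    rcases eq_or_lt_of_le (h₁nonneg y) with h | h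
    · simp [hf₁def, hq₁def, ← h, h₁zero y h.symm]
    · simp only [hf₁def, hq₁def]
      rw [← ENNReal.ofReal_mul (div_nonneg (sq_nonneg _) (h₁nonneg y)),
        div_mul_cancel₀ _ (ne_of_gt h)]
  have key₂ : ∀ y, f₂ y * q₂ y = ENNReal.ofReal ((p₂' y) ^ 2) := by
    intro y
    rcases eq_or_lt_of_le (h₂nonneg y) with h | h
    · simp [hf₂def, hq₂def, ← h, h₂zero y h.symm]
    · simp only [hf₂def, hq₂def]
      rw [← ENNReal.ofReal_mul (div_nonneg (sq_nonneg _) (h₂nonneg y)),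
        div_mul_cancel₀ _ (ne_of_gt h)]
  have hsqrt : ∀ z : ℝ≥0∞, (z ^ (1/2 : ℝ)) ^ (2 : ℕ) = z := by
    intro z
    rw [← ENNReal.rpow_natCast (z ^ (1/2 : ℝ)) 2, ← ENNReal.rpow_mul]
    norm_num
  have hsqrt2 : ∀ z : ℝ≥0∞, (z ^ (2 : ℕ)) ^ (1/2 : ℝ) = z := by
    intro z
    rw [← ENNReal.rpow_natCast z 2, ← ENNReal.rpow_mul]
    norm_num
  have hsqrt' : ∀ z : ℝ≥0∞, (z ^ (1/2 : ℝ)) ^ (2 : ℝ) = z := by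
    intro z
    rw [← ENNReal.rpow_mul]
    norm_num
  set G : ℝ → ℝ≥0∞ := fun x => ∫⁻ y, f₁ y * f₂ (x - y) with hGdef
  -- pointwise bound
  have hpt : ∀ x, ENNReal.ofReal ((p'' x) ^ 2 / p x) ≤ G x := by
    intro x
    rcases le_or_gt (p x) 0 with hx | hx
    · have hle : (p'' x) ^ 2 / p x ≤ 0 := by
        rcases eq_or_lt_of_le hx with h0 | h0
        · rw [h0, div_zero]
        · exact div_nonpos_of_nonneg_of_nonpos (sq_nonneg _) hx
      rw [ENNReal.ofReal_of_nonpos hle]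
      exact zero_le
    · -- main case : 0 < p x
      have hconv : Integrable (fun y => p₁ (x - y) * p₂ y) := by
        by_contra h
        rw [hp x, integral_undef h] at hx
        exact lt_irrefl 0 hx
      have hPx : ENNReal.ofReal (p x) = ∫⁻ y, q₁ y * q₂ (x - y) := by
        rw [hp x, ofReal_integral_eq_lintegral_ofReal hconv
          (Filter.Eventually.of_forall fun y => mul_nonneg (h₁nonneg _) (h₂nonneg _))]
        have h1 : ∀ y, ENNReal.ofReal (p₁ (x - y) * p₂ y)
            = q₁ (x - y) * q₂ (x - (x - y)) := by
          intro y
          rw [ENNReal.ofReal_mul (h₁nonneg _), sub_sub_cancel]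
        rw [lintegral_congr h1]
        exact (Measure.measurePreserving_sub_left volume x).lintegral_comp
          (mq₁.mul (mq₂.comp (measurable_const.sub measurable_id)))
      set a : ℝ → ℝ≥0∞ := fun y => (f₁ y * f₂ (x - y)) ^ (1/2 : ℝ) with hadef
      set b : ℝ → ℝ≥0∞ := fun y => (q₁ y * q₂ (x - y)) ^ (1/2 : ℝ) with hbdef
      have ha : Measurable a :=
        (mf₁.mul (mf₂.comp (measurable_const.sub measurable_id))).pow measurable_const
      have hb : Measurable b :=
        (mq₁.mul (mq₂.comp (measurable_const.sub measurable_id))).pow measurable_const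
      have hCS := ENNReal.lintegral_mul_le_Lp_mul_Lq volume
        Real.HolderConjugate.two_two ha.aemeasurable hb.aemeasurable
      have ha2 : ∀ y, a y ^ (2 : ℝ) = f₁ y * f₂ (x - y) := fun y => hsqrt' _
      have hb2 : ∀ y, b y ^ (2 : ℝ) = q₁ y * q₂ (x - y) := fun y => hsqrt' _
      have hab : ∀ y, a y * b y = ENNReal.ofReal |p₁' y * p₂' (x - y)| := by
        intro y
        have h1 : a y * b y = ((f₁ y * q₁ y) * (f₂ (x - y) * q₂ (x - y))) ^ (1/2 : ℝ) := by
          rw [hadef, hbdef]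
          rw [← ENNReal.mul_rpow_of_nonneg _ _ (by norm_num : (0:ℝ) ≤ 1/2)]
          ring_nf
        rw [h1, key₁, key₂, ← ENNReal.ofReal_mul (sq_nonneg _), ← mul_pow]
        have h2 : (p₁' y * p₂' (x - y)) ^ 2 = |p₁' y * p₂' (x - y)| ^ 2 := (sq_abs _).symm
        rw [h2, ENNReal.ofReal_pow (abs_nonneg _), hsqrt2]
      have hnorm : ENNReal.ofReal |p'' x| ≤ ∫⁻ y, a y * b y := by
        rw [hp'' x]
        calc ENNReal.ofReal |∫ y, p₁' y * p₂' (x - y)|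
            = ‖∫ y, p₁' y * p₂' (x - y)‖ₑ := (Real.enorm_eq_ofReal_abs _).symm
          _ ≤ ∫⁻ y, ‖p₁' y * p₂' (x - y)‖ₑ := enorm_integral_le_lintegral_enorm _
          _ = ∫⁻ y, a y * b y := by
              apply lintegral_congr
              intro y
              rw [hab y, Real.enorm_eq_ofReal_abs]
      have hInta : (∫⁻ y, a y ^ (2:ℝ)) = G x := lintegral_congr ha2
      have hIntb : (∫⁻ y, b y ^ (2:ℝ)) = ENNReal.ofReal (p x) := by
        rw [lintegral_congr hb2, ← hPx]
      have hsq : ENNReal.ofReal ((p'' x) ^ 2) ≤ G x * ENNReal.ofReal (p x) := by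
        have h1 : ENNReal.ofReal ((p'' x) ^ 2) = ENNReal.ofReal |p'' x| ^ 2 := by
          rw [← ENNReal.ofReal_pow (abs_nonneg _), sq_abs]
        rw [h1]
        have h2 : ENNReal.ofReal |p'' x|
            ≤ (G x) ^ (1/2 : ℝ) * (ENNReal.ofReal (p x)) ^ (1/2 : ℝ) := by
          calc ENNReal.ofReal |p'' x| ≤ ∫⁻ y, a y * b y := hnorm
            _ = ∫⁻ y, (a * b) y := rfl
            _ ≤ (∫⁻ y, a y ^ (2:ℝ)) ^ (1/2:ℝ) * (∫⁻ y, b y ^ (2:ℝ)) ^ (1/2:ℝ) := hCS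
            _ = (G x) ^ (1/2 : ℝ) * (ENNReal.ofReal (p x)) ^ (1/2 : ℝ) := by
                rw [hInta, hIntb]
        calc ENNReal.ofReal |p'' x| ^ 2
            ≤ ((G x) ^ (1/2 : ℝ) * (ENNReal.ofReal (p x)) ^ (1/2 : ℝ)) ^ 2 :=
              pow_le_pow_left' h2 2
          _ = G x * ENNReal.ofReal (p x) := by rw [mul_pow, hsqrt, hsqrt]
      rw [ENNReal.ofReal_div_of_pos hx]
      exact ENNReal.div_le_of_le_mul hsq
  -- bound on the Fisher lintegrals
  have hf₁I : (∫⁻ y, f₁ y) ≤ ENNReal.ofReal I := by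
    have s₁meas : MeasurableSet {x | 0 < p₁ x} := (isOpen_lt continuous_const h₁cont).measurableSet
    have heq : (∫⁻ y, f₁ y) = ∫⁻ y in {x | 0 < p₁ x}, f₁ y := by
      rw [← lintegral_indicator s₁meas f₁]
      apply lintegral_congr
      intro y
      by_cases hy : y ∈ {x | 0 < p₁ x}
      · rw [Set.indicator_of_mem hy]
      · have h0 : p₁ y = 0 := le_antisymm (not_lt.1 hy) (h₁nonneg y)
        rw [Set.indicator_of_notMem hy]
        simp [hf₁def, h₁zero y h0]
    rw [heq, ← ofReal_integral_eq_lintegral_ofReal h₁fisher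
      (Filter.Eventually.of_forall fun y => div_nonneg (sq_nonneg _) (h₁nonneg y))]
    exact ENNReal.ofReal_le_ofReal h₁I
  have hf₂I : (∫⁻ y, f₂ y) ≤ ENNReal.ofReal I := by
    have s₂meas : MeasurableSet {x | 0 < p₂ x} := (isOpen_lt continuous_const h₂cont).measurableSet
    have heq : (∫⁻ y, f₂ y) = ∫⁻ y in {x | 0 < p₂ x}, f₂ y := by
      rw [← lintegral_indicator s₂meas f₂]
      apply lintegral_congr
      intro y
      by_cases hy : y ∈ {x | 0 < p₂ x}
      · rw [Set.indicator_of_mem hy]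
      · have h0 : p₂ y = 0 := le_antisymm (not_lt.1 hy) (h₂nonneg y)
        rw [Set.indicator_of_notMem hy]
        simp [hf₂def, h₂zero y h0]
    rw [heq, ← ofReal_integral_eq_lintegral_ofReal h₂fisher
      (Filter.Eventually.of_forall fun y => div_nonneg (sq_nonneg _) (h₂nonneg y))]
    exact ENNReal.ofReal_le_ofReal h₂I
  calc (∫⁻ x in {x | 0 < p x}, ENNReal.ofReal ((p'' x) ^ 2 / p x))
      ≤ ∫⁻ x in {x | 0 < p x}, G x := lintegral_mono fun x => hpt x
    _ ≤ ∫⁻ x, G x := lintegral_mono' Measure.restrict_le_self le_rfl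
    _ = (∫⁻ y, f₁ y) * (∫⁻ y, f₂ y) := by
        have hmeas : AEMeasurable (Function.uncurry fun x y => f₁ y * f₂ (x - y))
            ((volume : Measure ℝ).prod volume) :=
          ((mf₁.comp measurable_snd).mul
            (mf₂.comp (measurable_fst.sub measurable_snd))).aemeasurable
        rw [hGdef]
        rw [lintegral_lintegral_swap hmeas]
        have h1 : ∀ y, (∫⁻ x, f₁ y * f₂ (x - y)) = f₁ y * ∫⁻ z, f₂ z := by
          intro y
          have mf₂y : Measurable fun z : ℝ => f₂ (z - y) :=
            mf₂.comp (measurable_id.sub measurable_const)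
          rw [lintegral_const_mul (f₁ y) mf₂y, lintegral_sub_right_eq_self f₂ y]
        rw [lintegral_congr h1, lintegral_mul_const _ mf₁]
    _ ≤ ENNReal.ofReal I * ENNReal.ofReal I := mul_le_mul' hf₁I hf₂I
    _ = ENNReal.ofReal (I ^ 2) := by rw [← ENNReal.ofReal_mul hI0, sq]
end
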